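/- Let G be a finite group and let g, h ∈ G with g ∉ N_G(⟨h⟩) and o(h) = 2, and let k be an odd positive integer. Let u = b_k(g,h̃) = h^k + (1-h)·g·h̃ and w = b(g,h̃) = 1 + (1-h)·g·h̃. Then the subgroup ⟨u, w^{-1}·u·w⟩ of U(ℤG) is isomorphic to the infinite dihedral group, i.e. to the free product C_2 ⋆ C_2. -/

import Mathlib

/-- `h̃ = ∑_{x ∈ ⟨h⟩} x` in the group ring `R G`, written as `∑_{i < o(h)} h^i`. -/
noncomputable def grpTilde (R : Type*) [CommRing R] {G : Type*} [Group G] (h : G) :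
    MonoidAlgebra R G :=
  ∑ i ∈ Finset.range (orderOf h), MonoidAlgebra.of R G (h ^ i)

/-- Bovdi unit `b_k(g, h̃) = h^k + (1 - h)·g·h̃`. -/
noncomputable def bovdiL (R : Type*) [CommRing R] {G : Type*} [Group G] (g h : G) (k : ℕ) :
    MonoidAlgebra R G :=
  MonoidAlgebra.of R G (h ^ k) +
    (1 - MonoidAlgebra.of R G h) * MonoidAlgebra.of R G g * grpTilde R h

/-- Bovdi unit `b_k(h̃, g) = h^k + h̃·g·(1 - h)`. -/
noncomputable def bovdiR (R : Type*) [CommRing R] {G : Type*} [Group G] (g h : G) (k : ℕ) :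
    MonoidAlgebra R G :=
  MonoidAlgebra.of R G (h ^ k) +
    grpTilde R h * MonoidAlgebra.of R G g * (1 - MonoidAlgebra.of R G h)

/-! ### Auxiliary noncommutative ring identities -/

section AuxRing
variable {R : Type*} [Ring R]

lemma auxZero (x : R) (hx : x * x = 1) : (1+x)*(1-x) = 0 := by
  have : (1+x)*(1-x) = 1 - x*x := by noncomm_ring
  rw [this, hx, sub_self]

lemma auxEtaSq (x y : R) (hx : x * x = 1) : ((1-x)*y*(1+x)) * ((1-x)*y*(1+x)) = 0 := by
  calc ((1-x)*y*(1+x)) * ((1-x)*y*(1+x))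
      = (1-x)*y*(((1+x)*(1-x))*(y*(1+x))) := by noncomm_ring
    _ = 0 := by rw [auxZero x hx]; simp

lemma auxEtaX (x y : R) (hx : x * x = 1) : ((1-x)*y*(1+x)) * x = (1-x)*y*(1+x) := by
  calc ((1-x)*y*(1+x)) * x = (1-x)*y*(x + x*x) := by noncomm_ring
    _ = (1-x)*y*(x+1) := by rw [hx]
    _ = (1-x)*y*(1+x) := by rw [add_comm x 1]

lemma auxUU (x y : R) (hx : x * x = 1) :
    (x + (1-x)*y*(1+x)) * (x + (1-x)*y*(1+x)) = 1 := by
  calc (x + (1-x)*y*(1+x)) * (x + (1-x)*y*(1+x))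
      = x*x + (x - x*x)*y*(1+x) + (1-x)*y*(x + x*x) + (1-x)*y*(((1+x)*(1-x))*(y*(1+x))) := by
        noncomm_ring
    _ = 1 + (x - 1)*y*(1+x) + (1-x)*y*(x + 1) + (1-x)*y*(0*(y*(1+x))) := by
        rw [hx, auxZero x hx]
    _ = 1 := by noncomm_ring

lemma auxWWinv (x y : R) (hx : x * x = 1) :
    (1 + (1-x)*y*(1+x)) * (1 - (1-x)*y*(1+x)) = 1 := by
  calc (1 + (1-x)*y*(1+x)) * (1 - (1-x)*y*(1+x))
      = 1 - ((1-x)*y*(1+x)) * ((1-x)*y*(1+x)) := by noncomm_ring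
    _ = 1 := by rw [auxEtaSq x y hx, sub_zero]

lemma auxV (x y : R) (hx : x * x = 1) :
    (1 - (1-x)*y*(1+x)) * ((x + (1-x)*y*(1+x)) * (1 + (1-x)*y*(1+x)))
    = x - (1-x)*y*(1+x) := by
  have e1 : (1 - (1-x)*y*(1+x)) * (x + (1-x)*y*(1+x)) = x := by
    calc (1 - (1-x)*y*(1+x)) * (x + (1-x)*y*(1+x))
        = x + (1-x)*y*(1+x) - ((1-x)*y*(1+x))*x - ((1-x)*y*(1+x))*((1-x)*y*(1+x)) := by
          noncomm_ring
      _ = x + (1-x)*y*(1+x) - (1-x)*y*(1+x) - 0 := by rw [auxEtaX x y hx, auxEtaSq x y hx]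
      _ = x := by noncomm_ring
  have e2 : x * (1 + (1-x)*y*(1+x)) = x - (1-x)*y*(1+x) := by
    calc x * (1 + (1-x)*y*(1+x)) = x + (x - x*x)*y*(1+x) := by noncomm_ring
      _ = x + (x - 1)*y*(1+x) := by rw [hx]
      _ = x - (1-x)*y*(1+x) := by noncomm_ring
  rw [← mul_assoc, e1, e2]

lemma auxUV (x y : R) (hx : x * x = 1) :
    (x + (1-x)*y*(1+x)) * (x - (1-x)*y*(1+x)) = 1 + ((1-x)*y*(1+x) + (1-x)*y*(1+x)) := by
  calc (x + (1-x)*y*(1+x)) * (x - (1-x)*y*(1+x))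
      = x*x - (x - x*x)*y*(1+x) + (1-x)*y*(x + x*x) - (1-x)*y*(((1+x)*(1-x))*(y*(1+x))) := by
        noncomm_ring
    _ = 1 - (x - 1)*y*(1+x) + (1-x)*y*(x + 1) - (1-x)*y*(0*(y*(1+x))) := by
        rw [hx, auxZero x hx]
    _ = 1 + ((1-x)*y*(1+x) + (1-x)*y*(1+x)) := by noncomm_ring

end AuxRing

/-- Units inverse value from a right inverse. -/
lemma auxUnitsInv {M : Type*} [Monoid M] (z : Mˣ) (d : M) (hd : (z : M) * d = 1) :
    ((z⁻¹ : Mˣ) : M) = d := by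
  calc ((z⁻¹ : Mˣ) : M) = (z⁻¹ : Mˣ) * ((z : M) * d) := by rw [hd, mul_one]
    _ = (((z⁻¹ : Mˣ) : M) * z) * d := by rw [mul_assoc]
    _ = d := by rw [Units.inv_mul, one_mul]

/-- Hom from `C_2` determined by an involution. -/
def invoHom {M : Type*} [Monoid M] (u : M) (h2 : u * u = 1) :
    Multiplicative (ZMod 2) →* M where
  toFun x := u ^ (x.toAdd.val)
  map_one' := by
    show u ^ ((0 : ZMod 2)).val = 1
    simp
  map_mul' x y := by
    have key : ∀ m : ℕ, u ^ (m % 2) = u ^ m := fun m => by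
      conv_rhs => rw [← Nat.div_add_mod m 2]
      rw [pow_add, pow_mul, (show u^2 = 1 by rw [pow_two, h2]), one_pow, one_mul]
    show u ^ ((x.toAdd + y.toAdd : ZMod 2)).val = u ^ (x.toAdd.val) * u ^ (y.toAdd.val)
    rw [ZMod.val_add, key, pow_add]

lemma invoHom_gen {M : Type*} [Monoid M] (u : M) (h2 : u * u = 1) :
    invoHom u h2 (Multiplicative.ofAdd 1) = u := by
  show u ^ ((1 : ZMod 2)).val = u
  rw [show ((1 : ZMod 2)).val = 1 from rfl, pow_one]

open Monoid in
/-- Normal form in `C_2 ∗ C_2`. -/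
lemma coprodNF (x : Coprod (Multiplicative (ZMod 2)) (Multiplicative (ZMod 2))) :
    ∃ n : ℤ, x = (Coprod.inl (Multiplicative.ofAdd 1) * Coprod.inr (Multiplicative.ofAdd 1)) ^ n
      ∨ x = (Coprod.inl (Multiplicative.ofAdd 1) * Coprod.inr (Multiplicative.ofAdd 1)) ^ n
            * Coprod.inl (Multiplicative.ofAdd 1) := by
  set a : Multiplicative (ZMod 2) := Multiplicative.ofAdd 1 with ha
  set aG : Coprod (Multiplicative (ZMod 2)) (Multiplicative (ZMod 2)) := Coprod.inl a with haG
  set bG : Coprod (Multiplicative (ZMod 2)) (Multiplicative (ZMod 2)) := Coprod.inr a with hbG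
  set t := aG * bG with ht
  have haa : aG * aG = 1 := by
    rw [haG, ← map_mul, show a * a = 1 by decide, map_one]
  have hbb : bG * bG = 1 := by
    rw [hbG, ← map_mul, show a * a = 1 by decide, map_one]
  have hainv : aG⁻¹ = aG := inv_eq_of_mul_eq_one_right haa
  have hbinv : bG⁻¹ = bG := inv_eq_of_mul_eq_one_right hbb
  have h1 : aG * t = t⁻¹ * aG := by
    rw [ht, mul_inv_rev, hainv, hbinv, ← mul_assoc, haa, one_mul, mul_assoc, haa, mul_one]
  have hsc : SemiconjBy aG t t⁻¹ := h1
  have hatn : ∀ n : ℤ, aG * t ^ n = t ^ (-n) * aG := fun n => by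
    have := hsc.zpow_right n
    rwa [inv_zpow, ← zpow_neg] at this
  have hb : bG = aG * t := by rw [ht, ← mul_assoc, haa, one_mul]
  induction x using Monoid.Coprod.induction_on' with
  | one => exact ⟨0, Or.inl (by simp)⟩
  | inl_mul m x ih =>
    obtain ⟨n, hx | hx⟩ := ih <;>
    rcases (by decide : ∀ z : Multiplicative (ZMod 2), z = 1 ∨ z = Multiplicative.ofAdd 1) m
      with rfl | rfl
    · exact ⟨n, Or.inl (by rw [map_one, one_mul, hx])⟩
    · exact ⟨-n, Or.inr (by rw [hx, hatn])⟩
    · exact ⟨n, Or.inr (by rw [map_one, one_mul, hx])⟩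
    · refine ⟨-n, Or.inl ?_⟩
      rw [hx]
      calc aG * (t ^ n * aG) = (aG * t ^ n) * aG := by group
        _ = (t ^ (-n) * aG) * aG := by rw [hatn]
        _ = t ^ (-n) := by rw [mul_assoc, haa, mul_one]
  | inr_mul m x ih =>
    obtain ⟨n, hx | hx⟩ := ih <;>
    rcases (by decide : ∀ z : Multiplicative (ZMod 2), z = 1 ∨ z = Multiplicative.ofAdd 1) m
      with rfl | rfl
    · exact ⟨n, Or.inl (by rw [map_one, one_mul, hx])⟩
    · refine ⟨-(n+1), Or.inr ?_⟩
      rw [hx, show (Coprod.inr (Multiplicative.ofAdd 1) :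
        Coprod (Multiplicative (ZMod 2)) (Multiplicative (ZMod 2))) = bG from rfl]
      calc bG * t ^ n = aG * t ^ (n+1) := by rw [hb]; group
        _ = t ^ (-(n+1)) * aG := hatn _
    · exact ⟨n, Or.inr (by rw [map_one, one_mul, hx])⟩
    · refine ⟨-(n+1), Or.inl ?_⟩
      rw [hx, show (Coprod.inr (Multiplicative.ofAdd 1) :
        Coprod (Multiplicative (ZMod 2)) (Multiplicative (ZMod 2))) = bG from rfl]
      calc bG * (t ^ n * aG) = (aG * t ^ (n+1)) * aG := by rw [hb]; group
        _ = (t ^ (-(n+1)) * aG) * aG := by rw [hatn]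
        _ = t ^ (-(n+1)) := by rw [mul_assoc, haa, mul_one]

/-- If `o(h) = 2`, `g ∉ N_G(⟨h⟩)` and `k` is odd, then for `u = b_k(g,h̃)` and the bicyclic
unit `w = b(g,h̃)`, the subgroup `⟨u, u^w⟩` of `U(ℤG)` is isomorphic to the infinite
dihedral group `C_2 ⋆ C_2`. -/
theorem stmt_10 {G : Type*} [Group G] [Fintype G] (g h : G)
    (hg : g ∉ Subgroup.normalizer (Subgroup.zpowers h : Set G)) (hord : orderOf h = 2)
    (k : ℕ) (hk : 0 < k) (hodd : Odd k)
    (u w : (MonoidAlgebra ℤ G)ˣ)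
    (hu : (↑u : MonoidAlgebra ℤ G) = bovdiL ℤ g h k)
    (hw : (↑w : MonoidAlgebra ℤ G) =
      1 + (1 - MonoidAlgebra.of ℤ G h) * MonoidAlgebra.of ℤ G g * grpTilde ℤ h) :
    Nonempty ((Subgroup.closure {u, w⁻¹ * u * w} : Subgroup (MonoidAlgebra ℤ G)ˣ) ≃*
      Monoid.Coprod (Multiplicative (ZMod 2)) (Multiplicative (ZMod 2))) := by
  classical
  -- group element facts
  have hh : h * h = 1 := by
    rw [← pow_two, ← hord]; exact pow_orderOf_eq_one h
  have hne1 : h ≠ 1 := by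
    intro e; rw [e, orderOf_one] at hord; omega
  have hinv : h⁻¹ = h := inv_eq_of_mul_eq_one_right hh
  have hcomm : h * g ≠ g * h := by
    intro e
    apply hg
    rw [Subgroup.mem_normalizer_iff]
    intro x
    have hc : Commute g h := e.symm
    simp only [Subgroup.mem_zpowers_iff]
    constructor
    · rintro ⟨m, rfl⟩
      exact ⟨m, by rw [(hc.zpow_right m).eq, mul_assoc, mul_inv_cancel, mul_one]⟩
    · rintro ⟨m, hm⟩
      have h2 : g * h ^ m * g⁻¹ = h ^ m := by
        rw [(hc.zpow_right m).eq, mul_assoc, mul_inv_cancel, mul_one]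
      refine ⟨m, ?_⟩
      have hx : x = g⁻¹ * h ^ m * g := by rw [hm]; group
      rw [hx, ← h2]
      group
      simpa using h2
  have hg1 : g ≠ 1 := fun e => hg (e ▸ (Subgroup.normalizer (Subgroup.zpowers h : Set G)).one_mem)
  have hgh : g ≠ h := fun e => hg (by
    rw [e]; exact Subgroup.le_normalizer (Subgroup.mem_zpowers h))
  have d1 : g * h ≠ g := fun e => hne1 (by
    have := e.trans (mul_one g).symm
    exact mul_left_cancel this)
  have d2 : h * g ≠ g := fun e => hne1 (by
    have := e.trans (one_mul g).symm
    exact mul_right_cancel this)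
  have d3 : h * g * h ≠ g := by
    intro e
    apply hcomm
    calc h * g = h * g * (h * h) := by rw [hh, mul_one]
      _ = (h * g * h) * h := by group
      _ = g * h := by rw [e]
  have d4 : g * h ≠ 1 := by
    intro e
    exact hgh ((eq_inv_of_mul_eq_one_left e).trans hinv)
  have d5 : h * g ≠ 1 := by
    intro e
    exact hgh ((eq_inv_of_mul_eq_one_right e).trans hinv)
  have d6 : h * g * h ≠ 1 := by
    intro e
    apply hg1
    have h7 : g = h⁻¹ * (h * g * h) * h⁻¹ := by group
    rw [e, mul_one, hinv, hh] at h7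
    exact h7
  have hk2 : h ^ k = h := by
    obtain ⟨m, rfl⟩ := hodd
    rw [pow_add, pow_mul, pow_two, hh, one_pow, one_mul, pow_one]
  -- algebra abbreviations
  set H : MonoidAlgebra ℤ G := MonoidAlgebra.of ℤ G h with hH
  set Gg : MonoidAlgebra ℤ G := MonoidAlgebra.of ℤ G g with hGg
  have hHH : H * H = 1 := by rw [hH, ← map_mul, hh, map_one]
  set η : MonoidAlgebra ℤ G := (1 - H) * Gg * (1 + H) with hη
  have hgt : grpTilde ℤ h = 1 + H := by
    unfold grpTilde
    rw [hord, Finset.sum_range_succ, Finset.sum_range_one, pow_zero, pow_one, map_one, hH]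
  have e_uu : (H + η) * (H + η) = 1 := by rw [hη]; exact auxUU H Gg hHH
  have e_ηsq : η * η = 0 := by rw [hη]; exact auxEtaSq H Gg hHH
  have e_ηH : η * H = η := by rw [hη]; exact auxEtaX H Gg hHH
  have e_wwinv : (1 + η) * (1 - η) = 1 := by rw [hη]; exact auxWWinv H Gg hHH
  have e_v : (1 - η) * ((H + η) * (1 + η)) = H - η := by rw [hη]; exact auxV H Gg hHH
  have e_uv : (H + η) * (H - η) = 1 + (η + η) := by rw [hη]; exact auxUV H Gg hHH
  have huval : (u : MonoidAlgebra ℤ G) = H + η := by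
    rw [hu]; unfold bovdiL; rw [hk2, hgt, hη, hH, hGg]
  have hwval : (w : MonoidAlgebra ℤ G) = 1 + η := by
    rw [hw, hgt, hη, hH, hGg]
  have huu : u * u = 1 := Units.ext (by
    rw [Units.val_mul, huval, Units.val_one]; exact e_uu)
  have hwinvval : ((w⁻¹ : (MonoidAlgebra ℤ G)ˣ) : MonoidAlgebra ℤ G) = 1 - η :=
    auxUnitsInv w _ (by rw [hwval]; exact e_wwinv)
  set v := w⁻¹ * u * w with hv
  have hvval : (v : MonoidAlgebra ℤ G) = H - η := by
    rw [hv, Units.val_mul, Units.val_mul, hwinvval, huval, hwval, mul_assoc]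
    exact e_v
  have hvv : v * v = 1 := by
    rw [hv]
    calc (w⁻¹*u*w)*(w⁻¹*u*w) = w⁻¹*(u*u)*w := by group
      _ = 1 := by rw [huu]; group
  have huvval : ((u*v : (MonoidAlgebra ℤ G)ˣ) : MonoidAlgebra ℤ G) = 1 + (2:ℤ) • η := by
    rw [Units.val_mul, huval, hvval, e_uv, two_smul ℤ η]
  have hstep : ∀ c d : ℤ, ((1 : MonoidAlgebra ℤ G) + c • η) * (1 + d • η) = 1 + (c + d) • η := by
    intro c d
    simp only [mul_add, add_mul, one_mul, mul_one, smul_mul_assoc, mul_smul_comm, e_ηsq,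
      smul_zero, add_zero, add_smul]
    abel
  have huvinv : (((u*v)⁻¹ : (MonoidAlgebra ℤ G)ˣ) : MonoidAlgebra ℤ G) = 1 + (-2:ℤ) • η :=
    auxUnitsInv _ _ (by rw [huvval, hstep]; norm_num)
  have hpow : ∀ n : ℤ, (((u*v)^n : (MonoidAlgebra ℤ G)ˣ) : MonoidAlgebra ℤ G)
      = 1 + (2*n) • η := by
    intro n
    induction n using Int.induction_on with
    | zero => norm_num
    | succ i ih =>
      rw [zpow_add_one, Units.val_mul, ih, huvval, hstep,
        show ((2:ℤ)*(i:ℤ) + 2) = 2*((i:ℤ)+1) from by ring]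
    | pred i ih =>
      rw [zpow_sub_one, Units.val_mul, ih, huvinv, hstep,
        show ((2:ℤ)*(-(i:ℤ)) + -2) = 2*(-(i:ℤ)-1) from by ring]
  -- coefficient computations
  have hηexp : η = MonoidAlgebra.of ℤ G g + MonoidAlgebra.of ℤ G (g*h)
      - MonoidAlgebra.of ℤ G (h*g) - MonoidAlgebra.of ℤ G (h*g*h) := by
    rw [hη, hH, hGg]
    have e9 : (1 - MonoidAlgebra.of ℤ G h) * MonoidAlgebra.of ℤ G g
        * (1 + MonoidAlgebra.of ℤ G h)
        = MonoidAlgebra.of ℤ G g + MonoidAlgebra.of ℤ G g * MonoidAlgebra.of ℤ G h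
          - MonoidAlgebra.of ℤ G h * MonoidAlgebra.of ℤ G g
          - MonoidAlgebra.of ℤ G h * MonoidAlgebra.of ℤ G g * MonoidAlgebra.of ℤ G h := by
      noncomm_ring
    rw [e9]
    simp only [← map_mul]
  have hηg : η.coeff g = 1 := by
    rw [hηexp, MonoidAlgebra.of_apply, MonoidAlgebra.of_apply, MonoidAlgebra.of_apply,
      MonoidAlgebra.of_apply, MonoidAlgebra.coeff_sub, MonoidAlgebra.coeff_sub, MonoidAlgebra.coeff_add]
    simp [MonoidAlgebra.coeff_single_apply, d1, d2, d3]
  have hη1 : η.coeff 1 = 0 := by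
    rw [hηexp, MonoidAlgebra.of_apply, MonoidAlgebra.of_apply, MonoidAlgebra.of_apply,
      MonoidAlgebra.of_apply, MonoidAlgebra.coeff_sub, MonoidAlgebra.coeff_sub, MonoidAlgebra.coeff_add]
    simp [MonoidAlgebra.coeff_single_apply, hg1, d4, d5, d6]
  have hH1 : (H : MonoidAlgebra ℤ G).coeff 1 = 0 := by
    rw [hH]
    simp [MonoidAlgebra.of_apply, MonoidAlgebra.coeff_single_apply, hne1]
  have hone : (1 : MonoidAlgebra ℤ G).coeff 1 = 1 := by
    simp [MonoidAlgebra.one_def, MonoidAlgebra.coeff_single_apply]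
  -- key unit facts
  have keyn : ∀ n : ℤ, (u*v)^n = 1 → n = 0 := by
    intro n hn
    have h3 := congrArg Units.val hn
    rw [hpow n, Units.val_one] at h3
    have h0 : ((2*n : ℤ)) • η = 0 := by
      have h4 : (1 : MonoidAlgebra ℤ G) + (2*n:ℤ) • η = 1 + 0 := by rw [add_zero]; exact h3
      exact add_left_cancel h4
    have h2 : ((2*n:ℤ) • η).coeff g = (0 : MonoidAlgebra ℤ G).coeff g := by rw [h0]
    rw [MonoidAlgebra.coeff_smul, MonoidAlgebra.coeff_zero, Finsupp.smul_apply, hηg, Finsupp.zero_apply, smul_eq_mul, mul_one] at h2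
    omega
  have keyc : ∀ n : ℤ, (u*v)^n * u ≠ 1 := by
    intro n hn
    have h3 := congrArg Units.val hn
    rw [Units.val_mul, hpow n, huval, Units.val_one] at h3
    have lhs : ((1 : MonoidAlgebra ℤ G) + ((2*n:ℤ)) • η) * (H + η)
        = H + η + (2*n:ℤ) • η := by
      rw [add_mul, one_mul, smul_mul_assoc, mul_add, e_ηH, e_ηsq, add_zero]
    rw [lhs] at h3
    have h2 : (H + η + (2*n:ℤ) • η).coeff 1 = (1 : MonoidAlgebra ℤ G).coeff 1 := by rw [h3]
    rw [MonoidAlgebra.coeff_add, MonoidAlgebra.coeff_add, MonoidAlgebra.coeff_smul, Finsupp.add_apply, Finsupp.add_apply, Finsupp.smul_apply, hH1, hη1, hone] at h2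
    simp at h2
  -- the homomorphism from the coproduct
  set φ : Monoid.Coprod (Multiplicative (ZMod 2)) (Multiplicative (ZMod 2))
      →* (MonoidAlgebra ℤ G)ˣ := Monoid.Coprod.lift (invoHom u huu) (invoHom v hvv) with hφ
  have hφa : φ (Monoid.Coprod.inl (Multiplicative.ofAdd 1)) = u := by
    rw [hφ, Monoid.Coprod.lift_apply_inl, invoHom_gen]
  have hφb : φ (Monoid.Coprod.inr (Multiplicative.ofAdd 1)) = v := by
    rw [hφ, Monoid.Coprod.lift_apply_inr, invoHom_gen]
  have hφt : φ (Monoid.Coprod.inl (Multiplicative.ofAdd 1)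
      * Monoid.Coprod.inr (Multiplicative.ofAdd 1)) = u * v := by
    rw [map_mul, hφa, hφb]
  have hinj : Function.Injective φ := by
    rw [injective_iff_map_eq_one]
    intro x hx
    obtain ⟨n, rfl | rfl⟩ := coprodNF x
    · rw [map_zpow, hφt] at hx
      rw [keyn n hx, zpow_zero]
    · rw [map_mul, map_zpow, hφt, hφa] at hx
      exact absurd hx (keyc n)
  have hrange : φ.range = Subgroup.closure {u, v} := by
    apply le_antisymm
    · rintro x ⟨y, rfl⟩
      have hu' : u ∈ Subgroup.closure {u, v} := Subgroup.subset_closure (Set.mem_insert _ _)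
      have hv' : v ∈ Subgroup.closure {u, v} :=
        Subgroup.subset_closure (Set.mem_insert_of_mem _ rfl)
      obtain ⟨n, rfl | rfl⟩ := coprodNF y
      · rw [map_zpow, hφt]
        exact Subgroup.zpow_mem _ (mul_mem hu' hv') n
      · rw [map_mul, map_zpow, hφt, hφa]
        exact mul_mem (Subgroup.zpow_mem _ (mul_mem hu' hv') n) hu'
    · rw [Subgroup.closure_le]
      intro x hx
      simp only [Set.mem_insert_iff, Set.mem_singleton_iff] at hx
      rcases hx with rfl | rfl
      · exact ⟨_, hφa⟩
      · exact ⟨_, hφb⟩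
  exact ⟨(MulEquiv.subgroupCongr hrange.symm).trans (MonoidHom.ofInjective hinj).symm⟩
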